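/- Let (Ω, F, μ) be a probability space on a standard Borel space and let m ≤ F be a sub-σ-algebra (generated by the covariates X). Let 𝒵 and 𝒯 be measurable spaces, Z : Ω → 𝒵 a measurable random variable, t : 𝒵 → 𝒯 a surjective measurable exposure mapping, and Y : 𝒵 → Ω → ℝ a family of measurable potential outcomes satisfying fiber invariance (t(z) = t(z') implies Y(z) = Y(z')), with induced exposure-level potential outcomes Ỹ : 𝒯 → Ω → ℝ satisfying Y(z) = Ỹ(t(z)) for all z ∈ 𝒵. If strong ignorability holds, i.e., for every z ∈ 𝒵 the random variables Y(z) and Z are conditionally independent given m, then strong ignorability holds under the exposure mapping: for every τ ∈ 𝒯, the random variables Ỹ(τ) and T := t ∘ Z are conditionally independent given m. -/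
import Mathlib

open MeasureTheory ProbabilityTheory

/-- **Strong ignorability under exposure mapping (Corollary 1 of the paper).**
Let `t : 𝒵 → 𝒯` be a surjective measurable exposure mapping, `Z : Ω → 𝒵` the treatment,
and `Y : 𝒵 → Ω → ℝ` a fiber-invariant family of measurable potential outcomes with induced
exposure-level potential outcomes `Ytilde : 𝒯 → Ω → ℝ` satisfying `Y z = Ytilde (t z)`.
If for every `z` the potential outcome `Y z` is conditionally independent of `Z` given the
covariate σ-algebra `m`, then for every `τ`, `Ytilde τ` is conditionally independent of
`T := t ∘ Z` given `m`. -/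
theorem strong_ignorability_under_exposure_mapping
    {Ω : Type*} {mΩ : MeasurableSpace Ω} [StandardBorelSpace Ω]
    (μ : Measure Ω) [IsProbabilityMeasure μ]
    (m : MeasurableSpace Ω) (hm : m ≤ mΩ)
    {𝒵 𝒯 : Type*} [MeasurableSpace 𝒵] [MeasurableSpace 𝒯]
    (Z : Ω → 𝒵) (hZ : Measurable Z)
    (t : 𝒵 → 𝒯) (ht_surj : Function.Surjective t) (ht_meas : Measurable t)
    (Y : 𝒵 → Ω → ℝ) (hY_meas : ∀ z : 𝒵, Measurable (Y z))
    (hY_fiber : ∀ z z' : 𝒵, t z = t z' → Y z = Y z')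
    (Ytilde : 𝒯 → Ω → ℝ) (hfactor : ∀ z : 𝒵, Y z = Ytilde (t z))
    (h_ignor : ∀ z : 𝒵, CondIndepFun m hm (Y z) Z μ) :
    ∀ τ : 𝒯, CondIndepFun m hm (Ytilde τ) (t ∘ Z) μ := by
  intro τ
  obtain ⟨z, rfl⟩ := ht_surj τ
  have h := (h_ignor z).comp measurable_id ht_meas
  rw [hfactor z] at h
  exact h
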